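/- Let K ⊆ ℂ be a number field with K ⊄ ℝ, and let S be a finite set of places of K containing all archimedean places. If K is a CM-field and S contains a finite prime that splits in the extension K/K⁺, then there exists an S-unit u ∈ U_S such that u^n ∉ ℝ for every nonzero integer n. -/

import Mathlib

noncomputable section

open NumberField IsDedekindDomain
open scoped Multiplicative

variable (K : Type*) [Field K] [NumberField K]

/-- The places in `S`: all the infinite places of `K` together with the
finite places lying in a finite set `S₀`. -/
abbrev SPlace (S₀ : Finset (HeightOneSpectrum (𝓞 K))) : Type _ :=
  InfinitePlace K ⊕ {v // v ∈ S₀}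

variable (S₀ : Finset (HeightOneSpectrum (𝓞 K)))

/-- The completion of `K` at a place of `S`. -/
def SComp : SPlace K S₀ → Type _
  | .inl w => w.Completion
  | .inr v => v.1.adicCompletion K

instance : ∀ p : SPlace K S₀, CommRing (SComp K S₀ p)
  | .inl w => inferInstanceAs (CommRing w.Completion)
  | .inr v => inferInstanceAs (CommRing (v.1.adicCompletion K))

instance : ∀ p : SPlace K S₀, TopologicalSpace (SComp K S₀ p)
  | .inl w => inferInstanceAs (TopologicalSpace w.Completion)
  | .inr v => inferInstanceAs (TopologicalSpace (v.1.adicCompletion K))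

instance : ∀ p : SPlace K S₀, IsTopologicalRing (SComp K S₀ p)
  | .inl w => inferInstanceAs (IsTopologicalRing w.Completion)
  | .inr v => inferInstanceAs (IsTopologicalRing (v.1.adicCompletion K))

/-- The diagonal embedding of `K` into the product of its completions at places of `S`. -/
def SDiag : K →+* ∀ p : SPlace K S₀, SComp K S₀ p :=
  Pi.ringHom fun p => match p with
    | .inl w => algebraMap K w.Completion
    | .inr v => algebraMap K (v.1.adicCompletion K)

/-- The normalized absolute value at a place of `S`, extended to the completion.
At a real place it is the usual absolute value, at a complex place the square of
the modulus, and at a finite place `v` it is `(Nv)^(-v(x))`. -/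
def SAbs : ∀ p : SPlace K S₀, SComp K S₀ p → ℝ
  | .inl w => fun x : w.Completion => ‖x‖ ^ w.mult
  | .inr v => fun x : v.1.adicCompletion K =>
      if h : (Valued.v x : WithZero (Multiplicative ℤ)) = 0 then 0
      else (Nat.card (𝓞 K ⧸ v.1.asIdeal) : ℝ) ^ (Multiplicative.toAdd (WithZero.unzero h))

/-- The `S`-norm on the product of the completions. -/
def SNorm (ξ : ∀ p : SPlace K S₀, SComp K S₀ p) : ℝ :=
  ∏ p : SPlace K S₀, SAbs K S₀ p (ξ p)

/-- The ring of `S`-integers of `K`. -/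
def SInt : Subring K where
  carrier := {x | ∀ v : HeightOneSpectrum (𝓞 K), v ∉ S₀ → v.valuation K x ≤ 1}
  one_mem' := fun v _ => le_of_eq (map_one _)
  mul_mem' := fun ha hb v hv => by
    rw [Set.mem_setOf_eq] at *
    rw [map_mul]; exact mul_le_one' (ha v hv) (hb v hv)
  zero_mem' := fun v _ => by simp
  add_mem' := fun ha hb v hv => le_trans (Valuation.map_add _ _ _) (max_le (ha v hv) (hb v hv))
  neg_mem' := fun ha v hv => by
    rw [Set.mem_setOf_eq] at *
    rw [Valuation.map_neg]; exact ha v hv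

/-- The `S`-norm of a nonzero ideal of the `S`-integers: the cardinality of the quotient. -/
def SIdealNorm (a : Ideal (SInt K S₀)) : ℝ := (Nat.card (SInt K S₀ ⧸ a) : ℝ)

/-- `m_a^S (ξ) = N_S(a)⁻¹ ⬝ inf_{γ ∈ a} N_S (ξ - γ)`. -/
def mS (a : Ideal (SInt K S₀)) (ξ : ∀ p : SPlace K S₀, SComp K S₀ p) : ℝ :=
  (SIdealNorm K S₀ a)⁻¹ * ⨅ γ : a, SNorm K S₀ (ξ - SDiag K S₀ ((γ : SInt K S₀) : K))

/-- The `S`-Euclidean minimum of the ideal `a`. -/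
def MS (a : Ideal (SInt K S₀)) : ℝ := ⨆ ξ : K, mS K S₀ a (SDiag K S₀ ξ)

/-- The `S`-inhomogeneous minimum of the ideal `a`. -/
def MbarS (a : Ideal (SInt K S₀)) : ℝ := ⨆ ξ : ∀ p : SPlace K S₀, SComp K S₀ p, mS K S₀ a ξ

/-- The ideal `a`, embedded diagonally as an additive subgroup of `K̄_S`. -/
def aSub (a : Ideal (SInt K S₀)) : AddSubgroup (∀ p : SPlace K S₀, SComp K S₀ p) :=
  AddSubgroup.map ((SDiag K S₀).comp (SInt K S₀).subtype).toAddMonoidHom a.toAddSubgroup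

/-- The compact group `𝕋 = K̄_S / a`. -/
abbrev TS (a : Ideal (SInt K S₀)) : Type _ :=
  (∀ p : SPlace K S₀, SComp K S₀ p) ⧸ aSub K S₀ a

/-- The inclusion of the completion at a place `w ∈ S` into `K̄_S`, sending `x` to the
vector which is `x` in the `w`-component and `0` elsewhere. -/
def singleAt (w : SPlace K S₀) (x : SComp K S₀ w) : ∀ p : SPlace K S₀, SComp K S₀ p :=
  letI := Classical.decEq (SPlace K S₀)
  Pi.single w x

/-- The orbit of the class of `ξ` in `𝕋` under the multiplication action of the `S`-units. -/
def SOrb (a : Ideal (SInt K S₀)) (ξ : ∀ p : SPlace K S₀, SComp K S₀ p) : Set (TS K S₀ a) :=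
  {y | ∃ u : (SInt K S₀)ˣ, y = (QuotientAddGroup.mk (SDiag K S₀ ((u : SInt K S₀) : K) * ξ) : TS K S₀ a)}

/-- `K` is a CM-field: `K` is totally complex and is a quadratic extension of a
totally real subfield. -/
def IsCMField : Prop :=
  (∀ w : InfinitePlace K, w.IsComplex) ∧
    ∃ F : IntermediateField ℚ K,
      (∀ φ : F →+* ℂ, ∀ x : F, ∃ r : ℝ, φ x = (r : ℂ)) ∧ Module.finrank F K = 2

/-- The maximal totally real subfield `K⁺` of `K`. -/
def maxTotallyReal : IntermediateField ℚ K :=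
  sSup {F : IntermediateField ℚ K | ∀ φ : F →+* ℂ, ∀ x : F, ∃ r : ℝ, φ x = (r : ℂ)}

/-- A finite prime `v` of `K` splits in `K/K⁺` if some other prime of `K` has the same
valuation ring on `K⁺`, i.e. lies over the same prime of `K⁺`. -/
def SplitsInQuadratic (v : HeightOneSpectrum (𝓞 K)) : Prop :=
  ∃ w : HeightOneSpectrum (𝓞 K), w ≠ v ∧
    ∀ x : maxTotallyReal K, (v.valuation K (x : K) ≤ 1 ↔ w.valuation K (x : K) ≤ 1)

/-- Multiplication by the `S`-unit `u` as a map `𝕋 → 𝕋`. -/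
def TSmul (a : Ideal (SInt K S₀)) (u : (SInt K S₀)ˣ) : TS K S₀ a → TS K S₀ a :=
  QuotientAddGroup.map (aSub K S₀ a) (aSub K S₀ a)
    (AddMonoidHom.mulLeft (SDiag K S₀ ((u : SInt K S₀) : K)))
    (by
      rintro x ⟨γ, hγ, rfl⟩
      exact ⟨(u : SInt K S₀) * γ, Ideal.mul_mem_left a _ (by simpa using hγ),
        by simp [map_mul]⟩)

/-- The set of points of `𝕋` where `m_a^S` attains the inhomogeneous minimum. -/
def minSet (a : Ideal (SInt K S₀)) : Set (TS K S₀ a) :=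
  {t : TS K S₀ a | ∃ ξ, (QuotientAddGroup.mk ξ : TS K S₀ a) = t ∧ mS K S₀ a ξ = MbarS K S₀ a}

instance TSMeasurableSpace (a : Ideal (SInt K S₀)) : MeasurableSpace (TS K S₀ a) :=
  borel _


section Aux

variable {K : Type*} [Field K] [NumberField K]

/-- Auxiliary: an `S`-unit whose valuation at `v` is `< 1` and whose valuation at every
other finite place is `1`. -/
lemma exists_special_sUnit (S₀ : Finset (HeightOneSpectrum (𝓞 K)))
    {v : HeightOneSpectrum (𝓞 K)} (hv : v ∈ S₀) :
    ∃ u : (SInt K S₀)ˣ,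
      v.valuation K (((u : SInt K S₀) : K)) < 1 ∧
      ∀ w : HeightOneSpectrum (𝓞 K), w ≠ v →
        w.valuation K (((u : SInt K S₀) : K)) = 1 := by
  classical
  set n := Fintype.card (ClassGroup (𝓞 K)) with hn
  have hn0 : n ≠ 0 := Fintype.card_ne_zero
  have hvnz : v.asIdeal ∈ nonZeroDivisors (Ideal (𝓞 K)) := by
    rw [mem_nonZeroDivisors_iff_ne_zero, Ne, Ideal.zero_eq_bot]
    exact v.ne_bot
  have hcard : (ClassGroup.mk0 ⟨v.asIdeal, hvnz⟩) ^ n = 1 := pow_card_eq_one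
  rw [← map_pow] at hcard
  have key : ClassGroup.mk0 ⟨v.asIdeal ^ n, pow_mem hvnz n⟩ = 1 := by
    rw [← hcard]
    exact congrArg _ (Subtype.ext (SubmonoidClass.coe_pow (⟨v.asIdeal, hvnz⟩ : nonZeroDivisors (Ideal (𝓞 K))) n).symm)
  obtain ⟨g, hg⟩ := ((ClassGroup.mk0_eq_one_iff _).mp key).principal
  rw [Ideal.submodule_span_eq] at hg
  have hg0 : g ≠ 0 := by
    rintro rfl
    have hbot : v.asIdeal ^ n = ⊥ := by
      rw [hg, Ideal.span_singleton_eq_bot]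
    exact pow_ne_zero n (show v.asIdeal ≠ 0 from by
      rw [Ne, Ideal.zero_eq_bot]; exact v.ne_bot) (by rwa [Ideal.zero_eq_bot])
  have hvlt : v.intValuation g < 1 :=
    (v.intValuation_lt_one_iff_dvd g).mpr (hg ▸ dvd_pow_self v.asIdeal hn0)
  have hwalt : ∀ w : HeightOneSpectrum (𝓞 K), w ≠ v → w.intValuation g = 1 := by
    intro w hw
    refine le_antisymm (w.intValuation_le_one g) (not_lt.mp fun hlt => hw ?_)
    have hdvd : w.asIdeal ∣ v.asIdeal ^ n := by
      rw [hg]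
      exact (w.intValuation_lt_one_iff_dvd g).mp hlt
    obtain ⟨c, hc⟩ := w.prime.dvd_of_dvd_pow hdvd
    rcases v.irreducible.isUnit_or_isUnit hc with h1 | h2
    · exact absurd (Ideal.isUnit_iff.mp h1) w.isPrime.ne_top
    · have hwv : w.asIdeal = v.asIdeal := by
        rw [hc, Ideal.isUnit_iff.mp h2, Ideal.mul_top]
      exact HeightOneSpectrum.ext hwv
  set gK : K := algebraMap (𝓞 K) K g with hgKdef
  have hgK0 : gK ≠ 0 := fun h =>
    hg0 (IsFractionRing.injective (𝓞 K) K (by rw [map_zero]; exact h))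
  have hval : ∀ w : HeightOneSpectrum (𝓞 K), w.valuation K gK = w.intValuation g := by
    intro w
    rw [hgKdef, w.valuation_of_algebraMap]
  have hmem : gK ∈ SInt K S₀ := fun q _ => by
    rw [hval q]; exact q.intValuation_le_one g
  have hmem' : gK⁻¹ ∈ SInt K S₀ := by
    intro q hq
    have hqv : q ≠ v := fun h => hq (h ▸ hv)
    rw [map_inv₀, hval q, hwalt q hqv, inv_one]
  refine ⟨⟨⟨gK, hmem⟩, ⟨gK⁻¹, hmem'⟩,
      Subtype.ext (mul_inv_cancel₀ hgK0), Subtype.ext (inv_mul_cancel₀ hgK0)⟩, ?_, ?_⟩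
  · show v.valuation K gK < 1
    rw [hval]; exact hvlt
  · intro w hw
    show w.valuation K gK = 1
    rw [hval]; exact hwalt w hw

/-- Auxiliary: an intermediate field of a quadratic extension `K / F` which contains `F`
and is not everything must be `F`. -/
lemma intermediate_eq_of_ne_top {F M : IntermediateField ℚ K} (hFM : F ≤ M)
    (hM : M ≠ ⊤) (h2 : Module.finrank F K = 2) : M = F := by
  haveI : FiniteDimensional F K := Module.finite_of_finrank_eq_succ h2
  set M' := IntermediateField.extendScalars hFM with hM'def
  have htower : Module.finrank F M' * Module.finrank M' K = 2 := by
    rw [Module.finrank_mul_finrank]; exact h2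
  have hd : Module.finrank F M' ∣ 2 := ⟨_, htower.symm⟩
  rcases (Nat.prime_two.eq_one_or_self_of_dvd _ hd) with h1 | h1
  · have hbot : M' = ⊥ := IntermediateField.finrank_eq_one_iff.mp h1
    have hres : M'.restrictScalars ℚ = (⊥ : IntermediateField F K).restrictScalars ℚ := by
      rw [hbot]
    exact hres.trans (IntermediateField.restrictScalars_bot_eq_self F)
  · exfalso
    apply hM
    have htop : M' = ⊤ := by
      refine IntermediateField.eq_of_le_of_finrank_eq le_top ?_
      rw [h1, IntermediateField.finrank_top']
      exact h2.symm
    have hres : M'.restrictScalars ℚ = (⊤ : IntermediateField F K).restrictScalars ℚ := by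
      rw [htop]
    rw [IntermediateField.restrictScalars_top] at hres
    exact hres

end Aux

/-- Let `K ⊆ ℂ` be a number field with `K ⊄ ℝ`.  If `K` is a CM-field and
`S` contains a finite prime splitting in `K/K⁺`, then there is an `S`-unit `u` with
`u^n ∉ ℝ` for every nonzero integer `n`. -/
theorem exists_sUnit_powers_not_real
    (f : K →+* ℂ) (hKR : ∃ x : K, f x ∉ Set.range ((↑) : ℝ → ℂ))
    (hCM : _root_.IsCMField K) (hsplit : ∃ v ∈ S₀, SplitsInQuadratic K v) :
    ∃ u : (SInt K S₀)ˣ, ∀ n : ℤ, n ≠ 0 →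
      (f ((u : SInt K S₀) : K)) ^ n ∉ Set.range ((↑) : ℝ → ℂ) := by
  
  obtain ⟨hcomplex, F, hFreal, hF2⟩ := hCM
  obtain ⟨v, hvS, w, hwv, hvw⟩ := hsplit
  obtain ⟨u, hult, huw⟩ := exists_special_sUnit S₀ hvS
  refine ⟨u, fun n hn hreal => ?_⟩
  set uK : K := ((u : SInt K S₀) : K) with huKdef
  have hu0 : uK ≠ 0 := by
    intro h
    have h1 := huw w hwv
    rw [h, map_zero] at h1
    exact zero_ne_one h1
  -- the intermediate field of elements mapped into `ℝ` by `f`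
  have hQmem : ∀ q : ℚ, algebraMap ℚ K q ∈ Subfield.comap f Complex.ofRealHom.fieldRange := by
    intro q
    refine ⟨(q : ℝ), ?_⟩
    have h1 : f (algebraMap ℚ K q) = (q : ℂ) := eq_ratCast (f.comp (algebraMap ℚ K)) q
    rw [h1]
    exact Complex.ofReal_ratCast q
  set M : IntermediateField ℚ K :=
    (Subfield.comap f Complex.ofRealHom.fieldRange).toIntermediateField hQmem with hMdef
  have hmemM : ∀ y : K, y ∈ M ↔ f y ∈ Set.range ((↑) : ℝ → ℂ) := by
    intro y
    constructor
    · rintro ⟨r, hr⟩; exact ⟨r, hr⟩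
    · rintro ⟨r, hr⟩; exact ⟨r, hr⟩
  have hxM : uK ^ n ∈ M := by
    rw [hmemM, map_zpow₀]
    exact hreal
  have hMtop : M ≠ ⊤ := by
    intro h
    obtain ⟨y, hy⟩ := hKR
    exact hy ((hmemM y).mp (h ▸ IntermediateField.mem_top))
  have hFM : F ≤ M := by
    intro y hy
    obtain ⟨r, hr⟩ := hFreal (f.comp (algebraMap F K)) ⟨y, hy⟩
    exact (hmemM y).mpr ⟨r, hr.symm⟩
  have hMF : M = F := intermediate_eq_of_ne_top hFM hMtop hF2
  have hxT : uK ^ n ∈ maxTotallyReal K := by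
    have hFle : F ≤ maxTotallyReal K := le_sSup hFreal
    exact hFle (hMF ▸ hxM)
  -- valuation computations
  have hwu : w.valuation K uK = 1 := huw w hwv
  have hwx : w.valuation K (uK ^ n) = 1 := by
    rw [map_zpow₀, hwu, one_zpow]
  have hv1 : v.valuation K (uK ^ n) ≤ 1 := (hvw ⟨uK ^ n, hxT⟩).mpr (le_of_eq hwx)
  have hxTinv : (uK ^ n)⁻¹ ∈ maxTotallyReal K := (maxTotallyReal K).inv_mem hxT
  have hwxi : w.valuation K ((uK ^ n)⁻¹) = 1 := by
    rw [map_inv₀, hwx, inv_one]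
  have hv2 : v.valuation K ((uK ^ n)⁻¹) ≤ 1 := (hvw ⟨_, hxTinv⟩).mpr (le_of_eq hwxi)
  rw [map_inv₀] at hv2
  have hxne : v.valuation K (uK ^ n) ≠ 0 :=
    (Valuation.ne_zero_iff _).mpr (zpow_ne_zero n hu0)
  have heq : v.valuation K (uK ^ n) = 1 := by
    refine le_antisymm hv1 ?_
    have h3 := mul_le_mul_right hv2 (v.valuation K (uK ^ n))
    rwa [mul_inv_cancel₀ hxne, mul_one] at h3
  rw [map_zpow₀] at heq
  have ha0 : v.valuation K uK ≠ 0 := (Valuation.ne_zero_iff _).mpr hu0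
  set c : Multiplicative ℤ := WithZero.unzero ha0 with hcdef
  have hc : (c : WithZero (Multiplicative ℤ)) = v.valuation K uK := WithZero.coe_unzero ha0
  have hcz : c ^ n = 1 := by
    have hco : ((c ^ n : Multiplicative ℤ) : WithZero (Multiplicative ℤ)) = ((1 : Multiplicative ℤ) : WithZero (Multiplicative ℤ)) := by
      rw [WithZero.coe_zpow, hc, heq, WithZero.coe_one]
    exact WithZero.coe_inj.mp hco
  have hdz : n • c.toAdd = 0 := by
    rw [← toAdd_zpow, hcz, toAdd_one]
  have hc1 : c = 1 := by
    rcases smul_eq_zero.mp hdz with h | h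
    · exact absurd h hn
    · exact toAdd_eq_zero.mp h
  have hfin : v.valuation K uK = 1 := by
    rw [← hc, hc1, WithZero.coe_one]
  rw [hfin] at hult
  exact lt_irrefl 1 hult
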